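/- ∫₀^∞ ∫₀^∞ 1 / ((q + 1)(q′ + 1)(q + q′)) dq dq′ = π²/4. -/

import Mathlib

set_option maxHeartbeats 1000000

open MeasureTheory Set Filter Real Topology ENNReal NNReal


noncomputable def Ff (q : ℝ) : ℝ := Real.log q / ((q + 1) * (q - 1))

lemma term_rw {x : ℝ} (n : ℕ) :
    Real.log x / x ^ (2 * n + 2) = Real.log x / x ^ 2 * ((x ^ 2)⁻¹) ^ n := by
  have hpow : x ^ (2 * n + 2) = x ^ 2 * (x ^ 2) ^ n := by
    rw [← pow_mul, ← pow_add]
    congr 1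
    omega
  rw [hpow, ← div_div, div_eq_mul_inv (Real.log x / x ^ 2), inv_pow]

lemma series_eq {x : ℝ} (hx : 1 < x) :
    Ff x = ∑' n : ℕ, Real.log x / x ^ (2 * n + 2) := by
  have hx0 : (0:ℝ) < x := lt_trans one_pos hx
  have hxne : x ≠ 0 := hx0.ne'
  have hr0 : (0:ℝ) ≤ (x ^ 2)⁻¹ := by positivity
  have hr1 : (x ^ 2)⁻¹ < 1 := by
    rw [inv_lt_one_iff₀]
    right
    nlinarith
  simp only [term_rw]
  rw [_root_.tsum_mul_left, tsum_geometric_of_lt_one hr0 hr1]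
  have h1 : (1 : ℝ) - (x ^ 2)⁻¹ ≠ 0 := by
    intro h
    rw [sub_eq_zero] at h
    exact absurd h.symm (ne_of_lt hr1)
  have h2 : (x + 1) * (x - 1) ≠ 0 := by
    have : (0:ℝ) < (x + 1) * (x - 1) := by nlinarith
    exact this.ne'
  have h3 : x ^ 2 - 1 ≠ 0 := by
    have : (0:ℝ) < x ^ 2 - 1 := by nlinarith
    exact this.ne'
  rw [Ff]
  field_simp
  rw [div_eq_iff (sub_ne_zero.mpr hx.ne')]
  ring

lemma series_summable {x : ℝ} (hx : 1 < x) :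
    Summable (fun n : ℕ => Real.log x / x ^ (2 * n + 2)) := by
  have hx0 : (0:ℝ) < x := lt_trans one_pos hx
  have hr0 : (0:ℝ) ≤ (x ^ 2)⁻¹ := by positivity
  have hr1 : (x ^ 2)⁻¹ < 1 := by
    rw [inv_lt_one_iff₀]
    right
    nlinarith
  have hgeom : Summable (fun n : ℕ => ((x ^ 2)⁻¹) ^ n) :=
    summable_geometric_of_lt_one hr0 hr1
  have := hgeom.mul_left (Real.log x / x ^ 2)
  exact this.congr fun n => (term_rw n).symm

lemma inv_image : (fun x : ℝ => x⁻¹) '' Ioi 1 = Ioo 0 1 := by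
  ext y
  constructor
  · rintro ⟨x, hx, rfl⟩
    have hx1 : (1:ℝ) < x := hx
    have hx0 : (0:ℝ) < x := lt_trans one_pos hx1
    refine ⟨by positivity, ?_⟩
    rw [inv_lt_one_iff₀]
    exact Or.inr hx1
  · rintro ⟨hy0, hy1⟩
    refine ⟨y⁻¹, ?_, inv_inv y⟩
    show (1:ℝ) < y⁻¹
    rw [one_lt_inv_iff₀]
    exact ⟨hy0, hy1⟩

lemma subst_ptwise {x : ℝ} (hx : 1 < x) : |(-(x ^ 2)⁻¹)| • Ff x⁻¹ = Ff x := by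
  have hx0 : (0:ℝ) < x := lt_trans one_pos hx
  have hxne : x ≠ 0 := hx0.ne'
  have hinv1 : x⁻¹ < 1 := by rw [inv_lt_one_iff₀]; exact Or.inr hx
  have hinv0 : (0:ℝ) < x⁻¹ := by positivity
  have h1 : x⁻¹ + 1 ≠ 0 := by positivity
  have h2 : x⁻¹ - 1 ≠ 0 := ne_of_lt (by linarith)
  have h3 : (x + 1) * (x - 1) ≠ 0 := by
    have : (0:ℝ) < (x + 1) * (x - 1) := by nlinarith
    exact this.ne'
  have habs : |(-(x ^ 2)⁻¹)| = (x ^ 2)⁻¹ := by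
    rw [abs_neg, abs_of_pos (by positivity)]
  have h4 : x ^ 2 - x ^ 4 ≠ 0 := by
    have h5 : (0:ℝ) < x ^ 2 - 1 := by nlinarith
    have h6 := mul_pos (pow_pos hx0 2) h5
    have : x ^ 2 - x ^ 4 < 0 := by nlinarith
    exact this.ne
  rw [habs, smul_eq_mul, Ff, Ff, Real.log_inv]
  field_simp
  have h5 : (1 + x) * (1 - x) ≠ 0 := fun h => h3 (by linear_combination -h)
  rw [← neg_sub x 1, div_neg, neg_neg]
  ring




/-- Antiderivative lemma on `Ioi 1`. -/
lemma aux_int (m : ℕ) :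
    IntegrableOn (fun x : ℝ => Real.log x / x ^ (m + 2)) (Ioi 1) volume ∧
    ∫ x in Ioi (1:ℝ), Real.log x / x ^ (m + 2) = 1 / ((m : ℝ) + 1) ^ 2 := by
  set k : ℕ := m + 1 with hk
  have hkR : ((k : ℝ)) = (m : ℝ) + 1 := by push_cast [hk]; ring
  have hkpos : (0:ℝ) < k := by positivity
  set G : ℝ → ℝ := fun x => -(1/(k:ℝ)) * (Real.log x * (x ^ k)⁻¹) - (1/(k:ℝ)^2) * (x ^ k)⁻¹
    with hG
  have hderiv : ∀ x ∈ Ici (1:ℝ), HasDerivAt G (Real.log x / x ^ (m + 2)) x := by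
    intro x hx
    have hx0 : (0:ℝ) < x := lt_of_lt_of_le one_pos hx
    have hxne : x ≠ 0 := ne_of_gt hx0
    have h1 : HasDerivAt (fun y : ℝ => y ^ k) ((k:ℝ) * x ^ m) x := by
      simpa [hk] using hasDerivAt_pow k x
    have h2 : HasDerivAt (fun y : ℝ => (y ^ k)⁻¹)
        (-((k:ℝ) * x ^ m) / (x ^ k) ^ 2) x := h1.inv (pow_ne_zero k hxne)
    have h3 : HasDerivAt Real.log x⁻¹ x := Real.hasDerivAt_log hxne
    have h4 := (h3.mul h2).const_mul (-(1/(k:ℝ)))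
    have h5 := h2.const_mul (1/(k:ℝ)^2)
    have h6 := h4.sub h5
    refine h6.congr_deriv ?_
    have hpne : (x:ℝ) ^ k ≠ 0 := pow_ne_zero k hxne
    field_simp [hk]
    ring
  have hnonneg : ∀ x ∈ Ioi (1:ℝ), 0 ≤ Real.log x / x ^ (m + 2) := by
    intro x hx
    have h1 : (0:ℝ) ≤ Real.log x := Real.log_nonneg (le_of_lt hx)
    have h2 : (0:ℝ) < x ^ (m + 2) := pow_pos (lt_trans zero_lt_one hx) _
    exact div_nonneg h1 h2.le
  have htend : Tendsto G atTop (𝓝 0) := by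
    have T1 : Tendsto (fun x : ℝ => Real.log x / x ^ k) atTop (𝓝 0) := by
      have h := (isLittleO_log_rpow_atTop hkpos).tendsto_div_nhds_zero
      exact h.congr fun x => by rw [Real.rpow_natCast]
    have T2 : Tendsto (fun x : ℝ => (x ^ k)⁻¹) atTop (𝓝 (0:ℝ)) :=
      (tendsto_pow_atTop (by omega : k ≠ 0)).inv_tendsto_atTop
    have := (T1.const_mul (-(1/(k:ℝ)))).sub (T2.const_mul (1/(k:ℝ)^2))
    simpa [hG, div_eq_mul_inv, mul_comm] using this
  constructor
  · exact integrableOn_Ioi_deriv_of_nonneg' hderiv hnonneg htend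
  · have := integral_Ioi_of_hasDerivAt_of_nonneg' hderiv hnonneg htend
    rw [this]
    simp [hG, hkR]


lemma oddsum : HasSum (fun n : ℕ => 1 / (2 * (n : ℝ) + 1) ^ 2) (π ^ 2 / 8) := by
  have h := hasSum_zeta_two
  have heven : HasSum (fun k : ℕ => 1 / (((2 * k : ℕ) : ℝ)) ^ 2) (π ^ 2 / 6 / 4) := by
    have h4 := h.div_const 4
    have he : (fun k : ℕ => 1 / (((2 * k : ℕ) : ℝ)) ^ 2)
        = fun k : ℕ => 1 / (k : ℝ) ^ 2 / 4 := by
      funext k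
      rw [div_div]
      congr 1
      push_cast
      ring
    rw [he]
    exact h4
  have hsummable : Summable (fun k : ℕ => 1 / (((2 * k + 1 : ℕ) : ℝ)) ^ 2) := by
    have hinj : Function.Injective (fun k : ℕ => 2 * k + 1) := fun a b hab => by simp only [] at hab; omega
    exact h.summable.comp_injective hinj
  have hodd := hsummable.hasSum
  have htot : HasSum (fun n : ℕ => 1 / (n : ℝ) ^ 2)
      (π ^ 2 / 6 / 4 + ∑' k : ℕ, 1 / (((2 * k + 1 : ℕ) : ℝ)) ^ 2) :=
    HasSum.even_add_odd (f := fun n : ℕ => 1 / (n : ℝ) ^ 2) heven hodd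
  have huniq := h.unique htot
  have hval : (∑' k : ℕ, 1 / (((2 * k + 1 : ℕ) : ℝ)) ^ 2) = π ^ 2 / 8 := by
    have : π ^ 2 / 6 = π ^ 2 / 6 / 4 + ∑' k : ℕ, 1 / (((2 * k + 1 : ℕ) : ℝ)) ^ 2 := huniq
    linarith
  rw [hval] at hodd
  have he : (fun n : ℕ => 1 / (2 * (n : ℝ) + 1) ^ 2) = fun k : ℕ => 1 / (((2 * k + 1 : ℕ) : ℝ)) ^ 2 := by
    funext k; push_cast; ring_nf
  rw [he]
  exact hodd


lemma inner_eq (q : ℝ) (hq : 0 < q) (hq1 : q ≠ 1) :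
    (∫ q' in Ioi (0:ℝ), 1 / ((q + 1) * (q' + 1) * (q + q')))
      = Real.log q / ((q + 1) * (q - 1)) := by
  have hqne : q - 1 ≠ 0 := sub_ne_zero_of_ne hq1
  set g : ℝ → ℝ := fun y => (q - 1)⁻¹ * (Real.log (y + 1) - Real.log (q + y)) with hg
  have hderiv : ∀ y ∈ Ici (0:ℝ), HasDerivAt g (1 / ((y + 1) * (q + y))) y := by
    intro y hy
    have hy0 : (0:ℝ) ≤ y := hy
    have h1 : (0:ℝ) < y + 1 := by linarith
    have h2 : (0:ℝ) < q + y := by linarith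
    have d1 : HasDerivAt (fun y : ℝ => Real.log (y + 1)) (1 / (y + 1)) y := by
      have := ((hasDerivAt_id y).add_const 1).log h1.ne'
      simpa using this
    have d2 : HasDerivAt (fun y : ℝ => Real.log (q + y)) (1 / (q + y)) y := by
      have := ((hasDerivAt_id y).const_add q).log h2.ne'
      simpa using this
    have := (d1.sub d2).const_mul ((q - 1)⁻¹)
    refine this.congr_deriv ?_
    field_simp
    ring
  have hnonneg : ∀ y ∈ Ioi (0:ℝ), 0 ≤ 1 / ((y + 1) * (q + y)) := by
    intro y hy
    have hy0 : (0:ℝ) < y := hy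
    have h1 : (0:ℝ) < y + 1 := by linarith
    have h2 : (0:ℝ) < q + y := by linarith
    positivity
  have htend : Tendsto g atTop (𝓝 0) := by
    have hfrac : Tendsto (fun y : ℝ => (y + 1) / (q + y)) atTop (𝓝 1) := by
      have h1 : Tendsto (fun y : ℝ => 1 + y⁻¹) atTop (𝓝 (1 + 0)) :=
        tendsto_const_nhds.add tendsto_inv_atTop_zero
      have h2 : Tendsto (fun y : ℝ => q * y⁻¹ + 1) atTop (𝓝 (q * 0 + 1)) :=
        (tendsto_inv_atTop_zero.const_mul q).add tendsto_const_nhds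
      have h3 := h1.div h2 (by norm_num)
      have h4 : (fun y : ℝ => (1 + y⁻¹) / (q * y⁻¹ + 1)) =ᶠ[atTop]
          fun y => (y + 1) / (q + y) := by
        filter_upwards [eventually_gt_atTop (0:ℝ)] with y hy
        have h2' : (0:ℝ) < q + y := by linarith
        rw [div_eq_div_iff (by positivity) (by positivity)]
        field_simp
      have := h3.congr' h4
      simpa using this
    have hlog : Tendsto (fun y : ℝ => Real.log (y + 1) - Real.log (q + y)) atTop (𝓝 0) := by
      have hcont := (Real.continuousAt_log (one_ne_zero)).tendsto.comp hfrac
      rw [Real.log_one] at hcont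
      refine hcont.congr' ?_
      filter_upwards [eventually_gt_atTop (0:ℝ)] with y hy
      have h1 : (0:ℝ) < y + 1 := by linarith
      have h2 : (0:ℝ) < q + y := by linarith
      simp only [Function.comp]
      rw [Real.log_div h1.ne' h2.ne']
    have := hlog.const_mul ((q - 1)⁻¹)
    simpa [hg] using this
  have hval := integral_Ioi_of_hasDerivAt_of_nonneg' hderiv hnonneg htend
  have hint : (∫ q' in Ioi (0:ℝ), 1 / ((q + 1) * (q' + 1) * (q + q')))
      = (q + 1)⁻¹ * ∫ q' in Ioi (0:ℝ), 1 / ((q' + 1) * (q + q')) := by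
    rw [← integral_const_mul]
    refine setIntegral_congr_fun measurableSet_Ioi fun y hy => ?_
    have hy0 : (0:ℝ) < y := hy
    have h1 : (0:ℝ) < y + 1 := by linarith
    have h2 : (0:ℝ) < q + y := by linarith
    have h3 : (0:ℝ) < q + 1 := by linarith
    field_simp
  rw [hint, hval]
  have : g 0 = -((q - 1)⁻¹ * Real.log q) := by
    simp [hg]
  rw [this]
  field_simp
  ring









lemma term_nonneg_ae (n : ℕ) :
    0 ≤ᵐ[volume.restrict (Ioi (1:ℝ))] fun x => Real.log x / x ^ (2 * n + 2) := by
  refine (ae_restrict_iff' measurableSet_Ioi).mpr (ae_of_all _ fun x hx => ?_)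
  have hx1 : (1:ℝ) < x := hx
  exact div_nonneg (Real.log_nonneg hx1.le) (pow_pos (lt_trans one_pos hx1) _).le

lemma lint_term (n : ℕ) :
    ∫⁻ x in Ioi (1:ℝ), ENNReal.ofReal (Real.log x / x ^ (2 * n + 2))
      = ENNReal.ofReal (1 / (2 * (n : ℝ) + 1) ^ 2) := by
  rw [← ofReal_integral_eq_lintegral_ofReal (aux_int (2 * n)).1 (term_nonneg_ae n)]
  rw [(aux_int (2 * n)).2]
  congr 1
  push_cast
  ring

lemma sum_lint :
    (∑' n : ℕ, ∫⁻ x in Ioi (1:ℝ), ENNReal.ofReal (Real.log x / x ^ (2 * n + 2)))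
      = ENNReal.ofReal (π ^ 2 / 8) := by
  simp only [lint_term]
  rw [← ENNReal.ofReal_tsum_of_nonneg (fun n => by positivity) oddsum.summable,
    oddsum.tsum_eq]

lemma term_meas (n : ℕ) : Measurable (fun x : ℝ => Real.log x / x ^ (2 * n + 2)) :=
  Real.measurable_log.div (measurable_id.pow_const (2 * n + 2))

lemma Ff_meas : Measurable Ff :=
  Real.measurable_log.div ((measurable_id.add_const 1).mul (measurable_id.sub_const 1))

lemma integral_Ioi1 : ∫ x in Ioi (1:ℝ), Ff x = π ^ 2 / 8 := by
  rw [setIntegral_congr_fun measurableSet_Ioi (fun x hx => series_eq hx)]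
  rw [integral_tsum (fun n => (term_meas n).aestronglyMeasurable) ?_]
  · have h1 : ∀ n : ℕ, (∫ x in Ioi (1:ℝ), Real.log x / x ^ (2 * n + 2))
        = 1 / (2 * (n : ℝ) + 1) ^ 2 := by
      intro n
      rw [(aux_int (2 * n)).2]
      push_cast
      ring_nf
    rw [tsum_congr h1, oddsum.tsum_eq]
  · have h2 : ∀ n : ℕ, (∫⁻ x in Ioi (1:ℝ), ‖Real.log x / x ^ (2 * n + 2)‖ₑ)
        = ∫⁻ x in Ioi (1:ℝ), ENNReal.ofReal (Real.log x / x ^ (2 * n + 2)) := by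
      intro n
      refine setLIntegral_congr_fun measurableSet_Ioi (fun x hx => ?_)
      have hx1 : (1:ℝ) < x := hx
      exact Real.enorm_eq_ofReal
        (div_nonneg (Real.log_nonneg hx1.le) (pow_pos (lt_trans one_pos hx1) _).le)
    simp only [h2]
    rw [sum_lint]
    exact ENNReal.ofReal_ne_top

lemma Ff_nonneg_ae : 0 ≤ᵐ[volume.restrict (Ioi (1:ℝ))] Ff := by
  refine (ae_restrict_iff' measurableSet_Ioi).mpr (ae_of_all _ fun x hx => ?_)
  have hx1 : (1:ℝ) < x := hx
  have hpos : (0:ℝ) < (x + 1) * (x - 1) := by nlinarith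
  exact div_nonneg (Real.log_nonneg hx1.le) hpos.le

lemma Ff_int_Ioi1 : IntegrableOn Ff (Ioi (1:ℝ)) volume := by
  refine ⟨Ff_meas.aestronglyMeasurable, ?_⟩
  rw [hasFiniteIntegral_iff_ofReal Ff_nonneg_ae]
  have h1 : (∫⁻ x in Ioi (1:ℝ), ENNReal.ofReal (Ff x))
      = ∫⁻ x in Ioi (1:ℝ), ∑' n : ℕ, ENNReal.ofReal (Real.log x / x ^ (2 * n + 2)) := by
    refine setLIntegral_congr_fun measurableSet_Ioi (fun x hx => ?_)
    have hx1 : (1:ℝ) < x := hx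
    rw [series_eq hx1, ENNReal.ofReal_tsum_of_nonneg
      (fun n => div_nonneg (Real.log_nonneg hx1.le) (pow_pos (lt_trans one_pos hx1) _).le)
      (series_summable hx1)]
  rw [h1, lintegral_tsum (fun n => ((term_meas n).ennreal_ofReal).aemeasurable), sum_lint]
  exact ENNReal.ofReal_lt_top

lemma hderiv_inv : ∀ x ∈ Ioi (1:ℝ),
    HasDerivWithinAt (fun y : ℝ => y⁻¹) (-(x ^ 2)⁻¹) (Ioi 1) x := fun x hx =>
  (hasDerivAt_inv (ne_of_gt (lt_trans one_pos hx))).hasDerivWithinAt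

lemma hinj_inv : InjOn (fun x : ℝ => x⁻¹) (Ioi 1) := fun a _ b _ h => inv_injective h

lemma integral_Ioo01 : ∫ x in Ioo (0:ℝ) 1, Ff x = ∫ x in Ioi (1:ℝ), Ff x := by
  rw [← inv_image, integral_image_eq_integral_abs_deriv_smul measurableSet_Ioi
    hderiv_inv hinj_inv Ff]
  exact setIntegral_congr_fun measurableSet_Ioi fun x hx => subst_ptwise hx

lemma Ff_int_Ioc : IntegrableOn Ff (Ioc (0:ℝ) 1) volume := by
  rw [integrableOn_Ioc_iff_integrableOn_Ioo, ← inv_image,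
    integrableOn_image_iff_integrableOn_abs_deriv_smul measurableSet_Ioi hderiv_inv hinj_inv]
  exact Ff_int_Ioi1.congr_fun (fun x hx => (subst_ptwise hx).symm) measurableSet_Ioi



lemma Ff_def (q : ℝ) : Ff q = Real.log q / ((q + 1) * (q - 1)) := rfl



theorem gamma_value_for_one_over_q_plus_one :
    (∫ q in Set.Ioi (0 : ℝ), ∫ q' in Set.Ioi (0 : ℝ), 1 / ((q + 1) * (q' + 1) * (q + q')))
      = Real.pi ^ 2 / 4 := by
  have houter : (∫ q in Ioi (0:ℝ), ∫ q' in Ioi (0:ℝ), 1 / ((q + 1) * (q' + 1) * (q + q')))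
      = ∫ q in Ioi (0:ℝ), Ff q := by
    refine setIntegral_congr_ae measurableSet_Ioi ?_
    have hne : ∀ᵐ q : ℝ, q ≠ (1:ℝ) := by
      rw [ae_iff]
      simp only [not_not, Set.setOf_eq_eq_singleton]
      exact measure_singleton 1
    filter_upwards [hne] with q hq1 hq0
    rw [Ff_def]
    exact inner_eq q hq0 hq1
  rw [houter, ← Set.Ioc_union_Ioi_eq_Ioi (zero_le_one (α := ℝ)),
    setIntegral_union (Set.Ioc_disjoint_Ioi le_rfl) measurableSet_Ioi Ff_int_Ioc Ff_int_Ioi1,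
    integral_Ioc_eq_integral_Ioo, integral_Ioo01, integral_Ioi1]
  ring
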